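/- Let f be a probability density on ℝ^d × ℝ^q, and let g : ℝ^d × ℝ^q → ℝ be measurable with 0 < g(x,y) < 1 for all (x,y), with p := ∫ g(x,y) f(x,y) dx dy satisfying 0 < p < 1. Define the case density f₁(x,y) = g(x,y) f(x,y)/p and the control density f₀(x,y) = (1−g(x,y)) f(x,y)/(1−p). If g(x,y) = π(α_p + βᵀx + γ·(yᵀ1)) for some α_p ∈ ℝ, β ∈ ℝ^d, γ ∈ ℝ, then for every (x,y), f₁(x,y) = exp(α_r + βᵀx + γ·(yᵀ1)) f₀(x,y), where α_r = α_p + log((1−p)/p). -/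

import Mathlib

open MeasureTheory BigOperators

/-- Density ratio model: if the disease probability is logistic,
`g(x,y) = π(α_p + βᵀx + γ·(yᵀ1))`, then the case density `f₁ = g f / p` and the control
density `f₀ = (1−g) f / (1−p)` satisfy
`f₁(x,y) = exp(α_r + βᵀx + γ·(yᵀ1)) f₀(x,y)` with `α_r = α_p + log((1−p)/p)`. -/
theorem density_ratio_model
    {d q : ℕ}
    (f g f₀ f₁ : ((Fin d → ℝ) × (Fin q → ℝ)) → ℝ)
    (hf_nonneg : ∀ w, 0 ≤ f w)
    (hf_prob : ∫ w, f w = 1)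
    (hg_meas : Measurable g)
    (hg01 : ∀ w, 0 < g w ∧ g w < 1)
    (α_p : ℝ) (β : Fin d → ℝ) (γ : ℝ)
    (hg : ∀ w : (Fin d → ℝ) × (Fin q → ℝ),
      g w = Real.exp (α_p + (∑ i, β i * w.1 i) + γ * ∑ j, w.2 j) /
        (1 + Real.exp (α_p + (∑ i, β i * w.1 i) + γ * ∑ j, w.2 j)))
    (p : ℝ) (hp_def : p = ∫ w, g w * f w) (hp0 : 0 < p) (hp1 : p < 1)
    (hf₁ : ∀ w, f₁ w = g w * f w / p)
    (hf₀ : ∀ w, f₀ w = (1 - g w) * f w / (1 - p))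
    (α_r : ℝ) (hα_r : α_r = α_p + Real.log ((1 - p) / p)) :
    ∀ w : (Fin d → ℝ) × (Fin q → ℝ),
      f₁ w = Real.exp (α_r + (∑ i, β i * w.1 i) + γ * ∑ j, w.2 j) * f₀ w := by
  intro w
  set t := α_p + (∑ i, β i * w.1 i) + γ * ∑ j, w.2 j with ht
  have hden : (0:ℝ) < 1 + Real.exp t := by positivity
  have hgw : g w = Real.exp t / (1 + Real.exp t) := hg w
  have h1g : 1 - g w = 1 / (1 + Real.exp t) := by
    rw [hgw]; field_simp; ring
  have hratio : g w = Real.exp t * (1 - g w) := by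
    rw [hgw]; field_simp; ring
  have hexp : Real.exp (α_r + (∑ i, β i * w.1 i) + γ * ∑ j, w.2 j)
      = Real.exp t * ((1 - p) / p) := by
    have harg : α_r + (∑ i, β i * w.1 i) + γ * ∑ j, w.2 j
        = t + Real.log ((1 - p) / p) := by rw [hα_r, ht]; ring
    rw [harg, Real.exp_add, Real.exp_log (div_pos (by linarith) hp0)]
  have hp1' : (1:ℝ) - p ≠ 0 := by linarith
  calc f₁ w = g w * f w / p := hf₁ w
    _ = (Real.exp t * (1 - g w)) * f w / p := by rw [← hratio]
    _ = (Real.exp t * ((1 - p) / p)) * ((1 - g w) * f w / (1 - p)) := by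
        field_simp
    _ = Real.exp (α_r + (∑ i, β i * w.1 i) + γ * ∑ j, w.2 j) * f₀ w := by
        rw [hexp, hf₀ w]
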